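/- Conversely, if a Riemannian product M × N of manifolds of dimensions p ≥ 2 and q ≥ 2 is conformally flat (vanishing Weyl tensor) and both factors have constant sectional curvature c_M and c_N, then c_M = −c_N. -/

import Mathlib

open RealInnerProductSpace Module

section Aux

variable {T : Type*} [NormedAddCommGroup T] [InnerProductSpace ℝ T] [FiniteDimensional ℝ T]

lemma stmt6_aux_proj_inner (U : Submodule ℝ T) (x y : T) :
    ⟪((Submodule.orthogonalProjectionOnto U x : U) : T), ((Submodule.orthogonalProjectionOnto U y : U) : T)⟫
      = ⟪x, ((Submodule.orthogonalProjectionOnto U y : U) : T)⟫ := by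
  refine (Submodule.inner_starProjection_left_eq_right U x _).trans ?_
  congr 1
  exact Submodule.starProjection_eq_self_iff.mpr (Submodule.coe_mem _)

lemma stmt6_aux_proj_inner' (U : Submodule ℝ T) (x y : T) :
    ⟪((Submodule.orthogonalProjectionOnto U x : U) : T), ((Submodule.orthogonalProjectionOnto U y : U) : T)⟫
      = ⟪((Submodule.orthogonalProjectionOnto U x : U) : T), y⟫ := by
  rw [real_inner_comm, stmt6_aux_proj_inner, real_inner_comm]

lemma stmt6_aux_key (U : Submodule ℝ T) (X Y : T) :
    ∑ a, ⟪((Submodule.orthogonalProjectionOnto U (stdOrthonormalBasis ℝ T a) : U) : T),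
            ((Submodule.orthogonalProjectionOnto U Y : U) : T)⟫
        * ⟪((Submodule.orthogonalProjectionOnto U X : U) : T),
            ((Submodule.orthogonalProjectionOnto U (stdOrthonormalBasis ℝ T a) : U) : T)⟫
      = ⟪((Submodule.orthogonalProjectionOnto U X : U) : T), ((Submodule.orthogonalProjectionOnto U Y : U) : T)⟫ := by
  have h : ∀ a, ⟪((Submodule.orthogonalProjectionOnto U (stdOrthonormalBasis ℝ T a) : U) : T),
            ((Submodule.orthogonalProjectionOnto U Y : U) : T)⟫
        * ⟪((Submodule.orthogonalProjectionOnto U X : U) : T),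
            ((Submodule.orthogonalProjectionOnto U (stdOrthonormalBasis ℝ T a) : U) : T)⟫
      = ⟪((Submodule.orthogonalProjectionOnto U X : U) : T), stdOrthonormalBasis ℝ T a⟫
        * ⟪stdOrthonormalBasis ℝ T a, ((Submodule.orthogonalProjectionOnto U Y : U) : T)⟫ := by
    intro a
    rw [stmt6_aux_proj_inner, stmt6_aux_proj_inner', mul_comm]
  rw [Finset.sum_congr rfl fun a _ => h a,
    (stdOrthonormalBasis ℝ T).sum_inner_mul_inner]

end Aux

set_option maxHeartbeats 1000000 in
/-- If a Riemannian product of manifolds of dimensions p ≥ 2 and q ≥ 2 of constant sectional curvatures c_M and c_N is conformally flat (vanishing Weyl tensor), then c_M = −c_N. (Pointwise formulation on the tangent space of the product.) -/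
theorem stmt6 {T : Type*} [NormedAddCommGroup T] [InnerProductSpace ℝ T]
    [FiniteDimensional ℝ T]
    (T₁ : Submodule ℝ T) (T₂ : Submodule ℝ T) (hcompl : T₂ = T₁ᗮ)
    (hdim1 : 2 ≤ finrank ℝ T₁) (hdim2 : 2 ≤ finrank ℝ T₂)
    (cM cN : ℝ)
    -- the curvature tensor of the Riemannian product (Gauss sum of the factors)
    (R : T → T → T → T → ℝ)
    (hR : ∀ X Y Z W : T, R X Y Z W =
      cM * (⟪((Submodule.orthogonalProjectionOnto T₁ X : T₁) : T), ((Submodule.orthogonalProjectionOnto T₁ W : T₁) : T)⟫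
              * ⟪((Submodule.orthogonalProjectionOnto T₁ Y : T₁) : T), ((Submodule.orthogonalProjectionOnto T₁ Z : T₁) : T)⟫
            - ⟪((Submodule.orthogonalProjectionOnto T₁ X : T₁) : T), ((Submodule.orthogonalProjectionOnto T₁ Z : T₁) : T)⟫
              * ⟪((Submodule.orthogonalProjectionOnto T₁ Y : T₁) : T), ((Submodule.orthogonalProjectionOnto T₁ W : T₁) : T)⟫)
      + cN * (⟪((Submodule.orthogonalProjectionOnto T₂ X : T₂) : T), ((Submodule.orthogonalProjectionOnto T₂ W : T₂) : T)⟫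
              * ⟪((Submodule.orthogonalProjectionOnto T₂ Y : T₂) : T), ((Submodule.orthogonalProjectionOnto T₂ Z : T₂) : T)⟫
            - ⟪((Submodule.orthogonalProjectionOnto T₂ X : T₂) : T), ((Submodule.orthogonalProjectionOnto T₂ Z : T₂) : T)⟫
              * ⟪((Submodule.orthogonalProjectionOnto T₂ Y : T₂) : T), ((Submodule.orthogonalProjectionOnto T₂ W : T₂) : T)⟫))
    -- the Ricci tensor, scalar curvature and Weyl tensor of R
    (Ric : T → T → ℝ)
    (hRic : ∀ X Y : T, Ric X Y =
      ∑ a, R (stdOrthonormalBasis ℝ T a) X Y (stdOrthonormalBasis ℝ T a))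
    (scal : ℝ)
    (hscal : scal = ∑ a, Ric (stdOrthonormalBasis ℝ T a) (stdOrthonormalBasis ℝ T a))
    (Weyl : T → T → T → T → ℝ)
    (hWeyl : ∀ X Y Z W : T, Weyl X Y Z W = R X Y Z W
      - (Ric X W * ⟪Y, Z⟫ - Ric X Z * ⟪Y, W⟫
          + Ric Y Z * ⟪X, W⟫ - Ric Y W * ⟪X, Z⟫) / ((finrank ℝ T : ℝ) - 2)
      + scal * (⟪X, W⟫ * ⟪Y, Z⟫ - ⟪X, Z⟫ * ⟪Y, W⟫)
          / (((finrank ℝ T : ℝ) - 1) * ((finrank ℝ T : ℝ) - 2)))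
    (hW0 : ∀ X Y Z W : T, Weyl X Y Z W = 0) :
    cM = -cN := by
  subst hcompl
  set A : ℝ := ∑ a, ⟪((Submodule.orthogonalProjectionOnto T₁ (stdOrthonormalBasis ℝ T a) : T₁) : T),
      ((Submodule.orthogonalProjectionOnto T₁ (stdOrthonormalBasis ℝ T a) : T₁) : T)⟫ with hA
  set B : ℝ := ∑ a, ⟪((Submodule.orthogonalProjectionOnto T₁ᗮ (stdOrthonormalBasis ℝ T a) : T₁ᗮ) : T),
      ((Submodule.orthogonalProjectionOnto T₁ᗮ (stdOrthonormalBasis ℝ T a) : T₁ᗮ) : T)⟫ with hB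
  set n : ℝ := (finrank ℝ T : ℝ) with hn
  -- Ricci formula
  have hRicF : ∀ X Y : T, Ric X Y =
      cM * (A - 1) * ⟪((Submodule.orthogonalProjectionOnto T₁ X : T₁) : T),
          ((Submodule.orthogonalProjectionOnto T₁ Y : T₁) : T)⟫
      + cN * (B - 1) * ⟪((Submodule.orthogonalProjectionOnto T₁ᗮ X : T₁ᗮ) : T),
          ((Submodule.orthogonalProjectionOnto T₁ᗮ Y : T₁ᗮ) : T)⟫ := by
    intro X Y
    rw [hRic]
    simp only [hR]
    rw [Finset.sum_add_distrib, ← Finset.mul_sum, ← Finset.mul_sum,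
      Finset.sum_sub_distrib, Finset.sum_sub_distrib, ← Finset.sum_mul, ← Finset.sum_mul,
      stmt6_aux_key T₁, stmt6_aux_key T₁ᗮ, ← hA, ← hB]
    ring
  -- choice of vectors
  set b1 := stdOrthonormalBasis ℝ T₁ with hb1
  set b2 := stdOrthonormalBasis ℝ T₁ᗮ with hb2
  set e1 : T := (b1 ⟨0, by omega⟩ : T) with he1
  set e2 : T := (b1 ⟨1, by omega⟩ : T) with he2
  set f1 : T := (b2 ⟨0, by omega⟩ : T) with hf1
  set f2 : T := (b2 ⟨1, by omega⟩ : T) with hf2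
  have he1m : e1 ∈ T₁ := Submodule.coe_mem _
  have he2m : e2 ∈ T₁ := Submodule.coe_mem _
  have hf1m : f1 ∈ T₁ᗮ := Submodule.coe_mem _
  have hf2m : f2 ∈ T₁ᗮ := Submodule.coe_mem _
  -- inner products
  have hio1 : ∀ i j, ⟪(b1 i : T), (b1 j : T)⟫ = if i = j then 1 else 0 := by
    intro i j
    have := orthonormal_iff_ite.mp b1.orthonormal i j
    rwa [Submodule.coe_inner] at this
  have hio2 : ∀ i j, ⟪(b2 i : T), (b2 j : T)⟫ = if i = j then 1 else 0 := by
    intro i j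
    have := orthonormal_iff_ite.mp b2.orthonormal i j
    rwa [Submodule.coe_inner] at this
  have he11 : ⟪e1, e1⟫ = 1 := by rw [he1, hio1]; simp
  have he22 : ⟪e2, e2⟫ = 1 := by rw [he2, hio1]; simp
  have he12 : ⟪e1, e2⟫ = 0 := by rw [he1, he2, hio1]; simp [Fin.ext_iff]
  have hf11 : ⟪f1, f1⟫ = 1 := by rw [hf1, hio2]; simp
  have hf22 : ⟪f2, f2⟫ = 1 := by rw [hf2, hio2]; simp
  have hf12 : ⟪f1, f2⟫ = 0 := by rw [hf1, hf2, hio2]; simp [Fin.ext_iff]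
  have hef : ⟪e1, f1⟫ = 0 := (Submodule.mem_orthogonal _ _).mp hf1m e1 he1m
  -- projections of the chosen vectors
  have hp1mem : ∀ x ∈ T₁, ((Submodule.orthogonalProjectionOnto T₁ x : T₁) : T) = x := fun x hx =>
    Submodule.starProjection_eq_self_iff.mpr hx
  have hp2mem : ∀ x ∈ T₁ᗮ, ((Submodule.orthogonalProjectionOnto T₁ᗮ x : T₁ᗮ) : T) = x := fun x hx =>
    Submodule.starProjection_eq_self_iff.mpr hx
  have hp2z : ∀ x ∈ T₁, ((Submodule.orthogonalProjectionOnto T₁ᗮ x : T₁ᗮ) : T) = 0 := by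
    intro x hx
    have : Submodule.orthogonalProjectionOnto T₁ᗮ x = 0 :=
      Submodule.orthogonalProjectionOnto_apply_of_mem_orthogonal
        (T₁.le_orthogonal_orthogonal hx)
    simp only [this, Submodule.coe_zero]
  have hp1z : ∀ x ∈ T₁ᗮ, ((Submodule.orthogonalProjectionOnto T₁ x : T₁) : T) = 0 := by
    intro x hx
    have : Submodule.orthogonalProjectionOnto T₁ x = 0 :=
      Submodule.orthogonalProjectionOnto_apply_of_mem_orthogonal hx
    simp only [this, Submodule.coe_zero]
  -- Ricci values
  have hRe11 : Ric e1 e1 = cM * (A - 1) := by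
    rw [hRicF, hp1mem e1 he1m, hp2z e1 he1m, he11]; simp
  have hRe22 : Ric e2 e2 = cM * (A - 1) := by
    rw [hRicF, hp1mem e2 he2m, hp2z e2 he2m, he22]; simp
  have hRe12 : Ric e1 e2 = 0 := by
    rw [hRicF, hp1mem e1 he1m, hp1mem e2 he2m, hp2z e1 he1m, he12]; simp
  have hRe21 : Ric e2 e1 = 0 := by
    rw [hRicF, hp1mem e2 he2m, hp1mem e1 he1m, hp2z e1 he1m, real_inner_comm e1 e2, he12]; simp
  have hRf11 : Ric f1 f1 = cN * (B - 1) := by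
    rw [hRicF, hp2mem f1 hf1m, hp1z f1 hf1m, hf11]; simp
  have hRf22 : Ric f2 f2 = cN * (B - 1) := by
    rw [hRicF, hp2mem f2 hf2m, hp1z f2 hf2m, hf22]; simp
  have hRf12 : Ric f1 f2 = 0 := by
    rw [hRicF, hp2mem f1 hf1m, hp2mem f2 hf2m, hp1z f1 hf1m, hf12]; simp
  have hRf21 : Ric f2 f1 = 0 := by
    rw [hRicF, hp2mem f2 hf2m, hp2mem f1 hf1m, hp1z f1 hf1m, real_inner_comm f1 f2, hf12]; simp
  have hRef : Ric e1 f1 = 0 := by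
    rw [hRicF, hp1mem e1 he1m, hp1z f1 hf1m, hp2z e1 he1m]; simp
  have hRfe : Ric f1 e1 = 0 := by
    rw [hRicF, hp1mem e1 he1m, hp1z f1 hf1m, hp2z e1 he1m]; simp
  -- R values
  have hRee : R e1 e2 e2 e1 = cM := by
    rw [hR, hp1mem e1 he1m, hp1mem e2 he2m, hp2z e1 he1m, hp2z e2 he2m,
      he11, he22, he12]
    simp
  have hRff : R f1 f2 f2 f1 = cN := by
    rw [hR, hp2mem f1 hf1m, hp2mem f2 hf2m, hp1z f1 hf1m, hp1z f2 hf2m,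
      hf11, hf22, hf12]
    simp
  have hRmix : R e1 f1 f1 e1 = 0 := by
    rw [hR, hp1mem e1 he1m, hp1z f1 hf1m, hp2z e1 he1m, hp2mem f1 hf1m]
    simp
  -- dimension facts
  have hfr : finrank ℝ T₁ + finrank ℝ T₁ᗮ = finrank ℝ T :=
    T₁.finrank_add_finrank_orthogonal
  have hn4 : (4 : ℝ) ≤ n := by
    rw [hn]
    have h4 : 4 ≤ finrank ℝ T := by omega
    exact_mod_cast h4
  have h2 : n - 2 ≠ 0 := by intro h; linarith
  have h1 : n - 1 ≠ 0 := by intro h; linarith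
  -- the three Weyl equations
  have E1 := hW0 e1 e2 e2 e1
  rw [hWeyl, hRee, hRe11, hRe22, hRe12, hRe21, real_inner_comm e1 e2,
    he11, he22, he12] at E1
  have E2 := hW0 f1 f2 f2 f1
  rw [hWeyl, hRff, hRf11, hRf22, hRf12, hRf21, real_inner_comm f1 f2,
    hf11, hf22, hf12] at E2
  have E3 := hW0 e1 f1 f1 e1
  rw [hWeyl, hRmix, hRe11, hRf11, hRef, hRfe, real_inner_comm e1 f1,
    he11, hf11, hef] at E3
  have E1' : cM * ((n - 1) * (n - 2)) - 2 * (cM * (A - 1)) * (n - 1) + scal = 0 := by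
    field_simp at E1
    apply mul_right_cancel₀ h2
    linear_combination (n - 2) * E1
  have E2' : cN * ((n - 1) * (n - 2)) - 2 * (cN * (B - 1)) * (n - 1) + scal = 0 := by
    field_simp at E2
    apply mul_right_cancel₀ h2
    linear_combination (n - 2) * E2
  have E3' : - (cM * (A - 1) + cN * (B - 1)) * (n - 1) + scal = 0 := by
    field_simp at E3
    apply mul_right_cancel₀ h2
    linear_combination (n - 2) * E3
  have key : (cM + cN) * ((n - 1) * (n - 2)) = 0 := by linarith
  have hne : (n - 1) * (n - 2) ≠ 0 := mul_ne_zero h1 h2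
  have hzero := (mul_eq_zero.mp key).resolve_right hne
  linarith
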